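/- Let M be a commutative monoid. If the simplicial set K(M,2) satisfies the Kan condition Kan_0[3] (every horn Λ_0[3] → K(M,2) extends to Δ[3]), then every element of M is invertible, i.e., M is an abelian group. In particular, if K(M,2) is a Kan complex then M is a group. -/

import Mathlib

open CategoryTheory Simplicial

/-- The Kan condition `Kan_p[1]` in dimension 1. -/
def KanCondition1 (S : SSet) (p : Fin 2) : Prop :=
  ∀ c : (i : Fin 2) → i ≠ p → S _⦋0⦌,
    ∃ x : S _⦋1⦌, ∀ (i : Fin 2) (hi : i ≠ p), S.δ i x = c i hi

/-- The Kan condition `Kan_p[k+2]` in dimensions `≥ 2`. -/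
def KanCondition (S : SSet) (k : ℕ) (p : Fin (k + 3)) : Prop :=
  ∀ c : (i : Fin (k + 3)) → i ≠ p → S _⦋k + 1⦌,
    (∀ (i j : Fin (k + 3)) (hij : i < j) (hi : i ≠ p) (hj : j ≠ p),
      S.δ (⟨i.1, by have h1 : i.1 < j.1 := hij; have h2 := j.isLt; omega⟩ : Fin (k + 2)) (c j hj) =
      S.δ (⟨j.1 - 1, by have h2 := j.isLt; omega⟩ : Fin (k + 2)) (c i hi)) →
    ∃ x : S _⦋k + 2⦌, ∀ (i : Fin (k + 3)) (hi : i ≠ p), S.δ i x = c i hi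

/-- The Beck–Chevalley condition `BC_{p,q}[k+2]`. -/
def BCCondition (S : SSet) (k : ℕ) (p q : Fin (k + 3)) (hpq : p < q) : Prop :=
  ∀ cp cq : S _⦋k + 1⦌,
    S.δ (⟨p.1, by have h1 : p.1 < q.1 := hpq; have h2 := q.isLt; omega⟩ : Fin (k + 2)) cq =
    S.δ (⟨q.1 - 1, by have h2 := q.isLt; omega⟩ : Fin (k + 2)) cp →
    ∃ x : S _⦋k + 2⦌, S.δ p x = cp ∧ S.δ q x = cq


open CategoryTheory Simplicial

/-- The 2-cocycle condition for a family `a = (a_{ijk})_{i<j<k}` of elements of a commutative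
monoid `M`. -/
def IsCocycle (M : Type) [CommMonoid M] {n : ℕ}
    (a : (i j k : Fin (n + 1)) → i < j → j < k → M) : Prop :=
  ∀ (i j k l : Fin (n + 1)) (hij : i < j) (hjk : j < k) (hkl : k < l),
    a i k l (hij.trans hjk) hkl * a i j k hij hjk =
      a i j l hij (hjk.trans hkl) * a j k l hjk hkl

/-- Pullback of a family of elements of `M` along a morphism of the simplex category:
`(f^* a)_{ijk} = a_{f(i) f(j) f(k)}` when `f(i) < f(j) < f(k)`, and `1` otherwise. -/
def pullFamily (M : Type) [CommMonoid M] {m n : SimplexCategory} (f : m ⟶ n)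
    (a : (i j k : Fin (n.len + 1)) → i < j → j < k → M)
    (i j k : Fin (m.len + 1)) (_ : i < j) (_ : j < k) : M :=
  if h : f.toOrderHom i < f.toOrderHom j ∧ f.toOrderHom j < f.toOrderHom k
  then a (f.toOrderHom i) (f.toOrderHom j) (f.toOrderHom k) h.1 h.2 else 1

lemma family_congr (M : Type) [CommMonoid M] {n : ℕ}
    (a : (i j k : Fin (n + 1)) → i < j → j < k → M)
    {i i' j j' k k' : Fin (n + 1)} (hi : i = i') (hj : j = j') (hk : k = k')
    {hij hjk hij' hjk'} : a i j k hij hjk = a i' j' k' hij' hjk' := by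
  subst hi; subst hj; subst hk; rfl

lemma pullFamily_isCocycle (M : Type) [CommMonoid M] {m n : SimplexCategory} (f : m ⟶ n)
    (a : (i j k : Fin (n.len + 1)) → i < j → j < k → M) (ha : IsCocycle M a) :
    IsCocycle M (pullFamily M f a) := by
  intro i j k l hij hjk hkl
  have h1 : f.toOrderHom i ≤ f.toOrderHom j := f.toOrderHom.monotone hij.le
  have h2 : f.toOrderHom j ≤ f.toOrderHom k := f.toOrderHom.monotone hjk.le
  have h3 : f.toOrderHom k ≤ f.toOrderHom l := f.toOrderHom.monotone hkl.le
  unfold pullFamily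
  split_ifs <;> first | omega | skip
  all_goals try simp only [one_mul, mul_one]
  all_goals
    first
      | rfl
      | (exact ha _ _ _ _ _ _ _)
      | (exact family_congr M a (by omega) (by omega) (by omega))

/-- The simplicial set `K(M,2)` associated to a commutative monoid `M`: its `n`-simplices are
families `(a_{ijk})_{0 ≤ i < j < k ≤ n}` of elements of `M` satisfying the cocycle condition
`a_{ikl} * a_{ijk} = a_{ijl} * a_{jkl}`. -/
def K2 (M : Type) [CommMonoid M] : SSet.{0} where
  obj n := { a : (i j k : Fin (n.unop.len + 1)) → i < j → j < k → M // IsCocycle M a }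
  map {n₁ n₂} f := TypeCat.ofHom fun a => ⟨pullFamily M f.unop a.1, pullFamily_isCocycle M f.unop a.1 a.2⟩
  map_id n := by
    refine ConcreteCategory.ext_apply fun a => ?_
    apply Subtype.ext
    funext i j k hij hjk
    show pullFamily M (𝟙 n.unop) a.1 i j k hij hjk = a.1 i j k hij hjk
    unfold pullFamily
    rw [dif_pos ⟨hij, hjk⟩]
    exact family_congr M a.1 rfl rfl rfl
  map_comp {n₁ n₂ n₃} f g := by
    refine ConcreteCategory.ext_apply fun a => ?_
    apply Subtype.ext
    funext i j k hij hjk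
    show pullFamily M (g.unop ≫ f.unop) a.1 i j k hij hjk =
      pullFamily M g.unop (pullFamily M f.unop a.1) i j k hij hjk
    have m1 : g.unop.toOrderHom i ≤ g.unop.toOrderHom j := g.unop.toOrderHom.monotone hij.le
    have m2 : g.unop.toOrderHom j ≤ g.unop.toOrderHom k := g.unop.toOrderHom.monotone hjk.le
    unfold pullFamily
    simp only [show ∀ x, (g.unop ≫ f.unop).toOrderHom x
        = f.unop.toOrderHom (g.unop.toOrderHom x) from fun _ => rfl]
    rcases lt_or_eq_of_le m1 with s1 | s1 <;> rcases lt_or_eq_of_le m2 with s2 | s2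
    · split_ifs <;> first | rfl | omega
    · have e2 : f.unop.toOrderHom (g.unop.toOrderHom j) = f.unop.toOrderHom (g.unop.toOrderHom k) :=
        congrArg _ s2
      split_ifs <;> first | rfl | omega
    · have e1 : f.unop.toOrderHom (g.unop.toOrderHom i) = f.unop.toOrderHom (g.unop.toOrderHom j) :=
        congrArg _ s1
      split_ifs <;> first | rfl | omega
    · have e1 : f.unop.toOrderHom (g.unop.toOrderHom i) = f.unop.toOrderHom (g.unop.toOrderHom j) :=
        congrArg _ s1
      have e2 : f.unop.toOrderHom (g.unop.toOrderHom j) = f.unop.toOrderHom (g.unop.toOrderHom k) :=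
        congrArg _ s2
      split_ifs <;> first | rfl | omega

/-- The Kan complex condition as Mathlib stated it in December 2024 (horn filling for all
`Λ[n, i] ⟶ S`, including `n = 0`). -/
def OldKanComplex (S : SSet) : Prop :=
  ∀ ⦃n : ℕ⦄ ⦃i : Fin (n + 1)⦄ (σ₀ : (Λ[n, i] : SSet) ⟶ S),
    ∃ σ : Δ[n] ⟶ S, σ₀ = Λ[n, i].ι ≫ σ

section Aux

open SSet SimplexCategory

lemma K2_delta_apply (M : Type) [CommMonoid M] {n : ℕ} (mu : Fin (n + 3)) (x : (K2 M) _⦋n + 2⦌)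
    (i j k : Fin (n + 2)) (hij : i < j) (hjk : j < k) :
    ((K2 M).δ mu x).1 i j k hij hjk =
      x.1 (mu.succAbove i) (mu.succAbove j) (mu.succAbove k)
        (Fin.strictMono_succAbove mu hij) (Fin.strictMono_succAbove mu hjk) := by
  show pullFamily M (SimplexCategory.δ mu) x.1 i j k hij hjk = _
  unfold pullFamily
  rw [dif_pos ⟨Fin.strictMono_succAbove mu hij, Fin.strictMono_succAbove mu hjk⟩]
  rfl

/-- The 2-simplex of `K2 M` with value `m`. -/
def simp2 (M : Type) [CommMonoid M] (m : M) : (K2 M) _⦋2⦌ :=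
  ⟨fun _ _ _ _ _ => m, by
    intro i j k l hij hjk hkl
    exfalso
    have h1 : i.1 < j.1 := hij
    have h2 : j.1 < k.1 := hjk
    have h3 : k.1 < l.1 := hkl
    have h4 : l.1 < 3 := l.isLt
    omega⟩

lemma K2_one_subsingleton (M : Type) [CommMonoid M] (u v : (K2 M) _⦋1⦌) : u = v := by
  apply Subtype.ext
  funext i j k hij hjk
  exfalso
  have h1 : i.1 < j.1 := hij
  have h2 : j.1 < k.1 := hjk
  have h3 : k.1 < 2 := k.isLt
  omega

lemma k2_part1 (M : Type) [CommMonoid M] (h : KanCondition (K2 M) 1 0) (a : M) :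
    ∃ b : M, a * b = 1 := by
  obtain ⟨x, hx⟩ := h (fun i _ => if i = 2 then simp2 M a else simp2 M 1)
    (fun i j hij hi hj => K2_one_subsingleton M _ _)
  have key : ∀ (mu : Fin 4) (hmu : mu ≠ 0) (m : M),
      (if mu = 2 then simp2 M a else simp2 M 1) = simp2 M m →
      x.1 (mu.succAbove 0) (mu.succAbove 1) (mu.succAbove 2)
        (Fin.strictMono_succAbove mu (by decide)) (Fin.strictMono_succAbove mu (by decide)) = m := by
    intro mu hmu m hm
    have e : (K2 M).δ mu x = simp2 M m := (hx mu hmu).trans hm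
    have h' : ((K2 M).δ mu x).1 0 1 2 (by decide) (by decide) = m := by rw [e]; rfl
    rw [K2_delta_apply] at h'
    exact h'
  have h2 : x.1 0 1 3 (by decide) (by decide) = a := by
    have := key 2 (by decide) a (if_pos rfl)
    exact (family_congr M x.1 (by decide) (by decide) (by decide)).symm.trans this
  have h1 : x.1 0 2 3 (by decide) (by decide) = 1 := by
    have := key 1 (by decide) 1 (if_neg (by decide))
    exact (family_congr M x.1 (by decide) (by decide) (by decide)).symm.trans this
  have h3 : x.1 0 1 2 (by decide) (by decide) = 1 := by
    have := key 3 (by decide) 1 (if_neg (by decide))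
    exact (family_congr M x.1 (by decide) (by decide) (by decide)).symm.trans this
  have hc := x.2 0 1 2 3 (by decide) (by decide) (by decide)
  rw [family_congr M x.1 rfl rfl rfl (hij' := by decide) (hjk' := by decide),
    family_congr M x.1 rfl rfl rfl (hij' := by decide) (hjk' := by decide)] at hc
  refine ⟨x.1 1 2 3 (by decide) (by decide), ?_⟩
  rw [family_congr M x.1 rfl rfl rfl (hij' := by decide) (hjk' := by decide),
    family_congr M x.1 rfl rfl rfl (hij' := by decide) (hjk' := by decide)] at hc
  rw [h1, h2, h3] at hc
  simpa using hc.symm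

/-- The family of a horn `Lambda[3,0] -> K2 M` determined by `a`. -/
def hornFam (M : Type) [CommMonoid M] (a : M) {m : SimplexCategoryᵒᵖ}
    (f : Fin (m.unop.len + 1) →o Fin 4)
    (i j k : Fin (m.unop.len + 1)) (_ : i < j) (_ : j < k) : M :=
  if (f i).1 = 0 ∧ (f j).1 = 1 ∧ (f k).1 = 3 then a else 1

lemma hornFam_cocycle (M : Type) [CommMonoid M] (a : M) {m : SimplexCategoryᵒᵖ}
    (α : (Λ[3, 0] : SSet).obj m) :
    IsCocycle M (hornFam M a (SSet.stdSimplex.asOrderHom α.1)) := by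
  intro i j k l hij hjk hkl
  set f := SSet.stdSimplex.asOrderHom α.1 with hf
  obtain ⟨t, ht⟩ := Set.ne_univ_iff_exists_notMem _ |>.mp α.2
  simp only [Set.mem_union, Set.mem_singleton_iff, not_or, Set.mem_range, not_exists] at ht
  have htr : ∀ x, (f x).1 ≠ t.1 := fun x h => ht.1 x (Fin.val_injective h)
  have ht0 : t.1 ≠ 0 := fun h => ht.2 (Fin.val_injective h)
  have hlt := t.isLt
  have m1 : (f i).1 ≤ (f j).1 := f.monotone hij.le
  have m2 : (f j).1 ≤ (f k).1 := f.monotone hjk.le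
  have m3 : (f k).1 ≤ (f l).1 := f.monotone hkl.le
  have b4 := (f l).isLt
  have e1 := htr i; have e2 := htr j; have e3 := htr k; have e4 := htr l
  unfold hornFam
  split_ifs <;> simp only [one_mul, mul_one] <;> first | rfl | omega

/-- The horn map `Lambda[3,0] -> K2 M` determined by `a`. -/
def hornMap (M : Type) [CommMonoid M] (a : M) : (Λ[3, 0] : SSet) ⟶ K2 M where
  app m := TypeCat.ofHom fun α => ⟨hornFam M a (SSet.stdSimplex.asOrderHom α.1), hornFam_cocycle M a α⟩
  naturality m₁ m₂ g := by
    refine ConcreteCategory.ext_apply fun α => ?_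
    apply Subtype.ext
    funext i j k hij hjk
    show hornFam M a (SSet.stdSimplex.asOrderHom ((Λ[3, 0] : SSet).map g α).1) i j k hij hjk =
      pullFamily M g.unop (hornFam M a (SSet.stdSimplex.asOrderHom α.1)) i j k hij hjk
    set f := SSet.stdSimplex.asOrderHom α.1
    have hcomp : ∀ x, SSet.stdSimplex.asOrderHom ((Λ[3, 0] : SSet).map g α).1 x = f (g.unop.toOrderHom x) :=
      fun _ => rfl
    unfold pullFamily hornFam
    simp only [hcomp]
    by_cases hmono : g.unop.toOrderHom i < g.unop.toOrderHom j ∧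
        g.unop.toOrderHom j < g.unop.toOrderHom k
    · rw [dif_pos hmono]
    · rw [dif_neg hmono, if_neg]
      rintro ⟨c1, c2, c3⟩
      have m1 : g.unop.toOrderHom i ≤ g.unop.toOrderHom j := g.unop.toOrderHom.monotone hij.le
      have m2 : g.unop.toOrderHom j ≤ g.unop.toOrderHom k := g.unop.toOrderHom.monotone hjk.le
      rcases lt_or_eq_of_le m1 with s1 | s1
      · rcases lt_or_eq_of_le m2 with s2 | s2
        · exact hmono ⟨s1, s2⟩
        · rw [s2] at c2; rw [c3] at c2; omega
      · rw [s1] at c1; rw [c2] at c1; omega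

lemma k2_part2 (M : Type) [CommMonoid M] (h : OldKanComplex (K2 M)) (a : M) :
    ∃ b : M, a * b = 1 := by
  obtain ⟨σ, hσ⟩ := h (hornMap M a)
  set x : (K2 M) _⦋3⦌ := σ.app _ (SSet.stdSimplex.objEquiv.symm (𝟙 ⦋3⦌)) with hx
  have key : ∀ (mu : Fin 4) (hmu : mu ≠ 0),
      (K2 M).δ mu x = (hornMap M a).app _ (SSet.horn.face 0 mu hmu) := by
    intro mu hmu
    have hnat := types_congr_hom (σ.naturality (SimplexCategory.δ mu).op) (SSet.stdSimplex.objEquiv.symm (𝟙 ⦋3⦌))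
    simp only [CategoryTheory.types_comp_apply] at hnat
    have hface : (Δ[3]).map (SimplexCategory.δ mu).op (SSet.stdSimplex.objEquiv.symm (𝟙 ⦋3⦌))
        = (Λ[3, 0].ι).app _ (SSet.horn.face 0 mu hmu) := by
      rfl
    have hres := types_congr_hom (congrArg (fun f => NatTrans.app f (Opposite.op ⦋2⦌)) hσ)
      (SSet.horn.face 0 mu hmu)
    simp only [NatTrans.comp_app, CategoryTheory.types_comp_apply] at hres
    show (K2 M).map (SimplexCategory.δ mu).op x = _
    exact (hnat.symm.trans (congrArg (σ.app _) hface)).trans hres.symm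
  have entry : ∀ (mu : Fin 4) (hmu : mu ≠ 0),
      x.1 (mu.succAbove 0) (mu.succAbove 1) (mu.succAbove 2)
        (Fin.strictMono_succAbove mu (by decide)) (Fin.strictMono_succAbove mu (by decide)) =
      (if (mu.succAbove 0).1 = 0 ∧ (mu.succAbove 1).1 = 1 ∧ (mu.succAbove 2).1 = 3
        then a else 1) := by
    intro mu hmu
    have h' : ((K2 M).δ mu x).1 0 1 2 (by decide) (by decide) =
        (if (mu.succAbove 0).1 = 0 ∧ (mu.succAbove 1).1 = 1 ∧ (mu.succAbove 2).1 = 3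
          then a else 1) := by
      rw [key mu hmu]; rfl
    rw [K2_delta_apply] at h'
    exact h'
  have h2 : x.1 0 1 3 (by decide) (by decide) = a := by
    have := entry 2 (by decide)
    exact (family_congr M x.1 (by decide) (by decide) (by decide)).symm.trans
      (this.trans (if_pos (by decide)))
  have h1 : x.1 0 2 3 (by decide) (by decide) = 1 := by
    have := entry 1 (by decide)
    exact (family_congr M x.1 (by decide) (by decide) (by decide)).symm.trans
      (this.trans (if_neg (by decide)))
  have h3 : x.1 0 1 2 (by decide) (by decide) = 1 := by
    have := entry 3 (by decide)
    exact (family_congr M x.1 (by decide) (by decide) (by decide)).symm.trans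
      (this.trans (if_neg (by decide)))
  have hc := x.2 0 1 2 3 (by decide) (by decide) (by decide)
  rw [family_congr M x.1 rfl rfl rfl (hij' := by decide) (hjk' := by decide),
    family_congr M x.1 rfl rfl rfl (hij' := by decide) (hjk' := by decide)] at hc
  refine ⟨x.1 1 2 3 (by decide) (by decide), ?_⟩
  rw [family_congr M x.1 rfl rfl rfl (hij' := by decide) (hjk' := by decide),
    family_congr M x.1 rfl rfl rfl (hij' := by decide) (hjk' := by decide)] at hc
  rw [h1, h2, h3] at hc
  simpa using hc.symm

end Aux

/-- If `K(M,2)` satisfies the Kan condition `Kan_0[3]`, then every element of the commutative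
monoid `M` is invertible, i.e. `M` is an abelian group. In particular, if `K(M,2)` is a Kan
complex then `M` is a group. -/
theorem k2_kanCondition_zero_three_implies_group (M : Type) [CommMonoid M] :
    (KanCondition (K2 M) 1 0 → ∀ a : M, ∃ b : M, a * b = 1) ∧
    (OldKanComplex (K2 M) → ∀ a : M, ∃ b : M, a * b = 1) := by
  exact ⟨k2_part1 M, k2_part2 M⟩
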